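/- For every trace-zero 2×2 complex matrix X, the trace of (ad X)⁴, where ad X is the endomorphism Y ↦ XY − YX of the space of trace-zero 2×2 complex matrices, equals 8·(tr(X²))². -/

import Mathlib

section Sl2Aux
open LieAlgebra LieAlgebra.SpecialLinear Matrix

lemma mem_sl2 (A : Matrix (Fin 2) (Fin 2) ℂ) (h : A.trace = 0) :
    A ∈ sl (Fin 2) ℂ := h

noncomputable def sl2EquivFun : sl (Fin 2) ℂ ≃ₗ[ℂ] (Fin 3 → ℂ) where
  toFun A := ![A.val 0 0, A.val 0 1, A.val 1 0]
  map_add' A B := by funext i; fin_cases i <;> simp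
  map_smul' c A := by funext i; fin_cases i <;> rfl
  invFun v := ⟨!![v 0, v 1; v 2, -v 0], mem_sl2 _ <| by
    simp [Matrix.trace, Fin.sum_univ_two]⟩
  left_inv A := by
    have h : A.val.trace = 0 := A.property
    have h11 : A.val 1 1 = -A.val 0 0 := by
      simp [Matrix.trace, Fin.sum_univ_two] at h; linear_combination h
    apply Subtype.ext
    ext i j
    fin_cases i <;> fin_cases j <;> simp [h11]
  right_inv v := by funext i; fin_cases i <;> simp

noncomputable def sl2Basis : Module.Basis (Fin 3) ℂ (sl (Fin 2) ℂ) :=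
  Module.Basis.ofEquivFun sl2EquivFun

end Sl2Aux

open LieAlgebra LieAlgebra.SpecialLinear in
/-- For every trace-zero 2×2 complex matrix `X`, the trace of `(ad X)⁴` as an
endomorphism of `sl(2,ℂ)` equals `8·(tr(X²))²`. -/
theorem sl2_adjoint_quartic_trace
    (X : Matrix (Fin 2) (Fin 2) ℂ) (hX : X.trace = 0) :
    LinearMap.trace ℂ (sl (Fin 2) ℂ)
        ((ad ℂ (sl (Fin 2) ℂ) ⟨X, hX⟩) ^ 4) =
      8 * (X ^ 2).trace ^ 2 := by
  have h11 : X 1 1 = -X 0 0 := by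
    simp [Matrix.trace, Fin.sum_univ_two] at hX; linear_combination hX
  have hM : LinearMap.toMatrix sl2Basis sl2Basis (ad ℂ (sl (Fin 2) ℂ) ⟨X, hX⟩) =
      !![0, -X 1 0, X 0 1; -2*X 0 1, 2*X 0 0, 0; 2*X 1 0, 0, -2*X 0 0] := by
    ext i j
    fin_cases i <;> fin_cases j <;>
      simp [LinearMap.toMatrix_apply, sl2Basis, sl2EquivFun, ad_apply,
        LieSubalgebra.coe_bracket, sl_bracket, Ring.lie_def, Matrix.mul_apply,
        Matrix.vecMul, dotProduct, Fin.sum_univ_two,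
        Function.update, h11] <;> ring
  rw [LinearMap.trace_eq_matrix_trace ℂ sl2Basis, ← LinearMap.toMatrix_pow, hM]
  have hX2 : (X ^ 2).trace = 2 * (X 0 0 * X 0 0 + X 0 1 * X 1 0) := by
    simp [pow_two, Matrix.trace, Matrix.mul_apply, Fin.sum_univ_two, h11]; ring
  rw [hX2]
  simp [pow_succ, Matrix.trace, Matrix.mul_apply, Fin.sum_univ_three, Fin.sum_univ_two]
  ring
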